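/- Let d > 0, ε > 0, D ∈ ℕ with d ≥ D/ε, and let N be a ℤ-valued random variable with the discrete Laplace distribution of parameter d, i.e., ℙ[N = k] = C_d · e^{−|k|/d} with C_d = (e^{1/d} − 1)/(e^{1/d} + 1). Then for all integers t, t' with |t − t'| ≤ D and every set S ⊆ ℤ, ℙ[t + N ∈ S] ≤ e^ε · ℙ[t' + N ∈ S]; that is, releasing an integer statistic of sensitivity at most D with added discrete Laplace noise of parameter d achieves ε-differential privacy. -/

import Mathlib

open MeasureTheory

/-- The probability mass function of the discrete Laplace distribution on `ℤ` with
parameter `d > 0`: `f_d(k) = C_d · e^{−|k|/d}` with `C_d = (e^{1/d} − 1)/(e^{1/d} + 1)`. -/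
noncomputable def discreteLaplacePMF (d : ℝ) (k : ℤ) : ℝ :=
  (Real.exp (1 / d) - 1) / (Real.exp (1 / d) + 1) * Real.exp (-(|k| : ℝ) / d)

lemma dlp_key (d ε : ℝ) (D : ℕ) (hd : 0 < d) (hε : 0 < ε) (hdD : d ≥ (D : ℝ) / ε)
    (t t' k : ℤ) (htt' : |t - t'| ≤ (D : ℤ)) :
    discreteLaplacePMF d (k - t) ≤ Real.exp ε * discreteLaplacePMF d (k - t') := by
  unfold discreteLaplacePMF
  have hC : 0 ≤ (Real.exp (1 / d) - 1) / (Real.exp (1 / d) + 1) := by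
    have h1 : 1 ≤ Real.exp (1 / d) := Real.one_le_exp (by positivity)
    have h2 : 0 < Real.exp (1 / d) + 1 := by positivity
    apply div_nonneg <;> linarith
  rw [mul_comm (Real.exp ε), mul_assoc]
  apply mul_le_mul_of_nonneg_left _ hC
  rw [← Real.exp_add, Real.exp_le_exp]
  have hD : (D : ℝ) ≤ ε * d := by
    rw [ge_iff_le, div_le_iff₀ hε] at hdD
    linarith
  have htri : (|k - t'| : ℝ) ≤ (|k - t| : ℝ) + (D : ℝ) := by
    have h1 : |k - t'| ≤ |k - t| + |t - t'| := by
      have := abs_sub_abs_le_abs_sub (k - t') (k - t)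
      have h2 := abs_add_le (k - t) (t - t')
      have : k - t' = (k - t) + (t - t') := by ring
      rw [this]
      exact h2
    have h2 : |k - t'| ≤ |k - t| + (D : ℤ) := le_trans h1 (by linarith)
    exact_mod_cast h2
  rw [div_add' _ _ _ hd.ne', div_le_div_iff₀ hd hd]
  push_cast at htri ⊢
  nlinarith [abs_nonneg (k - t), abs_nonneg (k - t'), (Int.cast_nonneg_iff.mpr (abs_nonneg (k - t)) : (0:ℝ) ≤ _)]

/-- Adding discrete Laplace noise of parameter `d ≥ D/ε` to an integer statistic of
sensitivity at most `D` achieves `ε`-differential privacy: for all integers `t, t'` with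
`|t − t'| ≤ D` and every set `S ⊆ ℤ`, `ℙ[t + N ∈ S] ≤ e^ε · ℙ[t' + N ∈ S]`. -/
theorem discreteLaplace_mechanism_dp {Ω : Type*} [MeasurableSpace Ω]
    (μ : Measure Ω) [IsProbabilityMeasure μ]
    (d ε : ℝ) (D : ℕ) (hd : 0 < d) (hε : 0 < ε) (hdD : d ≥ (D : ℝ) / ε)
    (N : Ω → ℤ) (hN : Measurable N)
    (hlaw : ∀ k : ℤ, μ {ω | N ω = k} = ENNReal.ofReal (discreteLaplacePMF d k))
    (t t' : ℤ) (htt' : |t - t'| ≤ (D : ℤ)) (S : Set ℤ) :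
    μ {ω | t + N ω ∈ S} ≤ ENNReal.ofReal (Real.exp ε) * μ {ω | t' + N ω ∈ S} := by
  have hSc : S.Countable := S.to_countable
  have hdecomp : ∀ s : ℤ, μ {ω | s + N ω ∈ S} = ∑' k : S, μ {ω | N ω = (k : ℤ) - s} := by
    intro s
    have hset : {ω | s + N ω ∈ S} = ⋃ k ∈ S, {ω | N ω = k - s} := by
      ext ω
      simp only [Set.mem_setOf_eq, Set.mem_iUnion]
      constructor
      · intro h; exact ⟨s + N ω, h, by ring⟩
      · rintro ⟨k, hk, hω⟩; have h : s + N ω = k := by omega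
        rw [h]; exact hk
    rw [hset, measure_biUnion hSc]
    · intro a ha b hb hab
      simp only [Function.onFun, Set.disjoint_left, Set.mem_setOf_eq]
      intro ω h1 h2; apply hab; omega
    · intro k _; exact hN (measurableSet_singleton _)
  rw [hdecomp t, hdecomp t', ← ENNReal.tsum_mul_left]
  apply ENNReal.tsum_le_tsum
  intro k
  rw [hlaw, hlaw, ← ENNReal.ofReal_mul (Real.exp_nonneg ε)]
  exact ENNReal.ofReal_le_ofReal (dlp_key d ε D hd hε hdD t t' k htt')
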